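/- If G is a connected graph with 𝒩_m(G) ≠ ∅ for some m, then Dim(G) ≤ η(G), where η(G) is the minimum over m and over pairs (v,v') with equal m-boundary of the number of vertices w in N(v,m) ∪ N(v',m) satisfying d(v,w) ≠ d(v',w). -/

import Mathlib

/-- Set of vertices distinguishing `u` and `v`. -/
noncomputable def distinguishers {V : Type*} (G : SimpleGraph V) (u v : V) : Set V :=
  {w | G.dist u w ≠ G.dist v w}

/-- `Dim(G)`: the largest `k` such that every pair of distinct vertices is
distinguished by at least `k` vertices. -/
noncomputable def metricDim {V : Type*} (G : SimpleGraph V) : ℕ :=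
  sSup {k | ∀ u v : V, u ≠ v → k ≤ (distinguishers G u v).ncard}

/-- The boundary `∂N(v,m)`: vertices at distance `m` from `v` having a
neighbor outside `N(v,m)`. -/
def bdry {V : Type*} (G : SimpleGraph V) (v : V) (m : ℕ) : Set V :=
  {w | G.dist v w = m ∧ ∃ x, G.Adj w x ∧ m < G.dist v x}

/-- `v` and `v'` are distinct and have equal (nonempty) `m`-boundary. -/
def eqBdry {V : Type*} (G : SimpleGraph V) (v v' : V) (m : ℕ) : Prop :=
  v ≠ v' ∧ bdry G v m = bdry G v' m ∧ (bdry G v m).Nonempty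

noncomputable def etaM {V : Type*} (G : SimpleGraph V) (v v' : V) (m : ℕ) : ℕ :=
  {w | (G.dist v w ≤ m ∨ G.dist v' w ≤ m) ∧ G.dist v w ≠ G.dist v' w}.ncard

noncomputable def etaG {V : Type*} (G : SimpleGraph V) : ℕ :=
  sInf {n | ∃ (m : ℕ) (v v' : V), eqBdry G v v' m ∧ n = etaM G v v' m}

/-- the diameter of `G`. -/
noncomputable def gdiam {V : Type*} (G : SimpleGraph V) : ℕ :=
  sSup {n | ∃ u v : V, G.dist u v = n}

/-- Reachability in `G` avoiding the vertex set `S`. -/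
def ReachOff {V : Type*} (G : SimpleGraph V) (S : Set V) (a b : V) : Prop :=
  ∃ p : G.Walk a b, ∀ x ∈ p.support, x ∉ S

/-- `S` is a common separating subset of the `m`-spheres of `v` and `v'`. -/
def CommonSepSubset {V : Type*} (G : SimpleGraph V) (v v' : V) (m : ℕ) (S : Set V) : Prop :=
  S ⊆ {w | G.dist v w = m} ∩ {w | G.dist v' w = m} ∧
  (∃ a b : V, a ∉ S ∧ b ∉ S ∧ ¬ ReachOff G S a b) ∧
  (∃ w : V, w ∉ S ∧ ¬ ReachOff G S w v ∧ ¬ ReachOff G S w v')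

/-- `(v,v') ∈ 𝒫ₘ(G)`. -/
def memPm {V : Type*} (G : SimpleGraph V) (v v' : V) (m : ℕ) : Prop :=
  v ≠ v' ∧ ∃ S : Set V, CommonSepSubset G v v' m S

/-- `Sₘ(v,v')`: the union of all common separating subsets of the `m`-spheres. -/
def SmUnion {V : Type*} (G : SimpleGraph V) (v v' : V) (m : ℕ) : Set V :=
  {x | ∃ S : Set V, CommonSepSubset G v v' m S ∧ x ∈ S}

/-- The union of the components of `G \ Sₘ(v,v')` containing neither `v` nor `v'`. -/
def avoidComps {V : Type*} (G : SimpleGraph V) (v v' : V) (m : ℕ) : Set V :=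
  {w | w ∉ SmUnion G v v' m ∧ ¬ ReachOff G (SmUnion G v v' m) w v ∧
    ¬ ReachOff G (SmUnion G v v' m) w v'}

noncomputable def muM {V : Type*} (G : SimpleGraph V) (v v' : V) (m : ℕ) : ℕ :=
  {w | w ∉ avoidComps G v v' m ∧ G.dist v w ≠ G.dist v' w}.ncard

noncomputable def muG {V : Type*} (G : SimpleGraph V) : ℕ :=
  sInf {n | ∃ (m : ℕ) (v v' : V), memPm G v v' m ∧ n = muM G v v' m}

/-- degree as the cardinality of the neighbor set. -/
noncomputable def ndeg {V : Type*} (G : SimpleGraph V) (v : V) : ℕ := (G.neighborSet v).ncard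

def IsMajor {V : Type*} (G : SimpleGraph V) (v : V) : Prop := 3 ≤ ndeg G v

/-- `u` is a terminal vertex of the major vertex `w`. -/
def IsTerminalOf {V : Type*} (G : SimpleGraph V) (u w : V) : Prop :=
  ndeg G u = 1 ∧ IsMajor G w ∧
    ∀ w', IsMajor G w' → w' ≠ w → G.dist u w < G.dist u w'

/-- `G` is a V-graph. -/
def IsVGraph {V : Type*} (G : SimpleGraph V) : Prop :=
  ∃ w, IsMajor G w ∧ {u | IsTerminalOf G u w}.ncard = 2 ∧
    ∀ u, IsTerminalOf G u w → G.Adj u w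

/-- `G` is a block graph: connected and every biconnected (2-connected)
set of vertices induces a clique. -/
def IsBlockGraph {V : Type*} (G : SimpleGraph V) : Prop :=
  G.Connected ∧ ∀ B : Set V, 3 ≤ B.ncard → (G.induce B).Connected →
    (∀ x ∈ B, (G.induce (B \ {x})).Connected) → G.IsClique B

/-- `G` is tagged. -/
def Tagged {V : Type*} (G : SimpleGraph V) : Prop :=
  ∃ K : Set V, G.IsClique K ∧ (∀ K' : Set V, K ⊆ K' → G.IsClique K' → K' = K) ∧
    3 ≤ K.ncard ∧ ∃ u ∈ K, ∃ v ∈ K, u ≠ v ∧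
      ndeg G u = K.ncard - 1 ∧ ndeg G v = K.ncard - 1

/-- `G` is neither a complete graph nor a path graph. -/
def NonElementary {V : Type*} (G : SimpleGraph V) : Prop :=
  G ≠ ⊤ ∧ ∀ n : ℕ, IsEmpty (G ≃g SimpleGraph.pathGraph n)


private lemma step_lemma {V : Type*} (G : SimpleGraph V) (hG : G.Connected) (u w : V)
    (h : 0 < G.dist u w) : ∃ x, G.Adj u x ∧ G.dist x w + 1 = G.dist u w := by
  obtain ⟨p, hp⟩ := (hG u w).exists_walk_length_eq_dist
  cases p with
  | nil => simp at h
  | @cons _ x _ ha q =>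
    refine ⟨x, ha, ?_⟩
    have h1 : G.dist x w ≤ q.length := SimpleGraph.dist_le q
    have h2 : q.length + 1 = G.dist u w := by simpa using hp
    have h3 : G.dist u w ≤ G.dist u x + G.dist x w := hG.dist_triangle
    have h4 : G.dist u x = 1 := SimpleGraph.dist_eq_one_iff_adj.2 ha
    omega

private lemma exists_at_dist {V : Type*} (G : SimpleGraph V) (hG : G.Connected) (v w : V)
    (m : ℕ) (hm : m ≤ G.dist v w) :
    ∃ u, G.dist v u = m ∧ G.dist u w + m = G.dist v w := by
  induction m with
  | zero => exact ⟨v, by simp, by simp⟩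
  | succ n ih =>
    obtain ⟨u, hu1, hu2⟩ := ih (by omega)
    have hpos : 0 < G.dist u w := by omega
    obtain ⟨x, hax, hx⟩ := step_lemma G hG u w hpos
    refine ⟨x, ?_, by
      have h3 : G.dist v w ≤ G.dist v x + G.dist x w := hG.dist_triangle
      have h5 : G.dist v x ≤ G.dist v u + G.dist u x := hG.dist_triangle
      have h4 : G.dist u x = 1 := SimpleGraph.dist_eq_one_iff_adj.2 hax
      omega⟩
    have h3 : G.dist v w ≤ G.dist v x + G.dist x w := hG.dist_triangle
    have h5 : G.dist v x ≤ G.dist v u + G.dist u x := hG.dist_triangle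
    have h4 : G.dist u x = 1 := SimpleGraph.dist_eq_one_iff_adj.2 hax
    omega

private lemma exists_bdry {V : Type*} (G : SimpleGraph V) (hG : G.Connected) (v w : V)
    (m : ℕ) (hm : m < G.dist v w) :
    ∃ u ∈ bdry G v m, G.dist u w + m = G.dist v w := by
  obtain ⟨u, hu1, hu2⟩ := exists_at_dist G hG v w m (le_of_lt hm)
  have hpos : 0 < G.dist u w := by omega
  obtain ⟨x, hax, hx⟩ := step_lemma G hG u w hpos
  have h5 : G.dist v x ≤ G.dist v u + G.dist u x := hG.dist_triangle
  have h3 : G.dist v w ≤ G.dist v x + G.dist x w := hG.dist_triangle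
  have h4 : G.dist u x = 1 := SimpleGraph.dist_eq_one_iff_adj.2 hax
  exact ⟨u, ⟨hu1, x, hax, by omega⟩, hu2⟩

private lemma far_eq {V : Type*} (G : SimpleGraph V) (hG : G.Connected) {v v' : V} {m : ℕ}
    (hE : eqBdry G v v' m) (w : V) (h1 : m < G.dist v w) (h2 : m < G.dist v' w) :
    G.dist v w = G.dist v' w := by
  obtain ⟨hne, hbd, hnon⟩ := hE
  have key : ∀ a a' : V, bdry G a m = bdry G a' m → m < G.dist a w → m < G.dist a' w →
      G.dist a' w ≤ G.dist a w := by
    intro a a' hb ha ha'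
    obtain ⟨u, hu, hsum⟩ := exists_bdry G hG a w m ha
    rw [hb] at hu
    have hd : G.dist a' u = m := hu.1
    have ht : G.dist a' w ≤ G.dist a' u + G.dist u w := hG.dist_triangle
    omega
  exact le_antisymm (key v' v hbd.symm h2 h1) (key v v' hbd h1 h2)

theorem stmt3 {V : Type*} [Fintype V] (G : SimpleGraph V) (hG : G.Connected)
    (h : ∃ (m : ℕ) (v v' : V), eqBdry G v v' m) :
    metricDim G ≤ etaG G := by
  obtain ⟨m0, v0, v0', hE0⟩ := h
  have hne : {n | ∃ (m : ℕ) (v v' : V), eqBdry G v v' m ∧ n = etaM G v v' m}.Nonempty :=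
    ⟨etaM G v0 v0' m0, m0, v0, v0', hE0, rfl⟩
  have hmem := Nat.sInf_mem hne
  obtain ⟨m, v, v', hE, heq⟩ := hmem
  have hsub : distinguishers G v v' ⊆
      {w | (G.dist v w ≤ m ∨ G.dist v' w ≤ m) ∧ G.dist v w ≠ G.dist v' w} := by
    intro w hw
    refine ⟨?_, hw⟩
    by_contra hc
    push_neg at hc
    exact hw (far_eq G hG hE w (by omega) (by omega))
  have hcard : (distinguishers G v v').ncard ≤ etaM G v v' m :=
    Set.ncard_le_ncard hsub (Set.toFinite _)
  have hdim : metricDim G ≤ (distinguishers G v v').ncard := by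
    refine csSup_le ⟨0, ?_⟩ ?_
    · intro u u' _; exact Nat.zero_le _
    · intro k hk; exact hk v v' hE.1
  unfold etaG
  rw [← heq] at hcard
  omega
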